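/- Let 𝔤 be a finite-dimensional simple Lie algebra over a field of characteristic zero, equipped with a ℤ-grading 𝔤 = ⊕_{i=−ν}^{ν} 𝔤_i of depth ν ≥ 1 such that 𝔤_{i+1} = ⁅𝔤_1, 𝔤_i⁆ for all 1 ≤ i < ν. Then for every integer i with 0 < i < ν, the centralizer of 𝔤_1 in 𝔤_i is trivial: if Y ∈ 𝔤_i satisfies ⁅Y, 𝔤_1⁆ = 0, then Y = 0. -/

import Mathlib

/-- Auxiliary chain of submodules: start with `span {Y}` and repeatedly close under
bracketing with homogeneous elements of nonpositive degree. -/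
def chainU {k L : Type*} [Field k] [LieRing L] [LieAlgebra k L]
    (g : ℤ → Submodule k L) (Y : L) : ℕ → Submodule k L
  | 0 => Submodule.span k {Y}
  | n + 1 => chainU g Y n ⊔
      Submodule.span k {z : L | ∃ j ≤ (0 : ℤ), ∃ a ∈ g j, ∃ v ∈ chainU g Y n, ⁅a, v⁆ = z}

/-- Let `𝔤` be a finite-dimensional simple Lie algebra over a field of
characteristic zero, with a ℤ-grading of depth `ν ≥ 1` such that `𝔤_{i+1} = ⁅𝔤_1, 𝔤_i⁆`
for `1 ≤ i < ν`.  Then for every `0 < i < ν` the centralizer of `𝔤_1` in `𝔤_i` is trivial. -/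
theorem stmt1 {k : Type*} [Field k] [CharZero k]
    {L : Type*} [LieRing L] [LieAlgebra k L] [FiniteDimensional k L]
    [LieAlgebra.IsSimple k L]
    (g : ℤ → Submodule k L)
    (hdirect : DirectSum.IsInternal g)
    (hbracket : ∀ i j : ℤ, ∀ x ∈ g i, ∀ y ∈ g j, ⁅x, y⁆ ∈ g (i + j))
    (ν : ℤ) (hν : 1 ≤ ν)
    (hdepth : ∀ i : ℤ, ν < |i| → g i = ⊥)
    (htop : g ν ≠ ⊥)
    (hgen : ∀ i : ℤ, 1 ≤ i → i < ν →
      g (i + 1) = Submodule.span k {z : L | ∃ x ∈ g 1, ∃ y ∈ g i, ⁅x, y⁆ = z})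
    (i : ℤ) (hi0 : 0 < i) (hiν : i < ν) :
    ∀ Y ∈ g i, (∀ x ∈ g 1, ⁅Y, x⁆ = 0) → Y = 0 := by
  intro Y hYmem hY
  by_contra hY0
  -- the chain and its union U
  set c : ℕ → Submodule k L := chainU g Y with hc
  have hchain : ∀ n, c n ≤ c (n + 1) := fun n => le_sup_left
  have hmono : Monotone c := monotone_nat_of_le_succ hchain
  set U : Submodule k L := ⨆ n, c n with hUdef
  have hcU : ∀ n, c n ≤ U := fun n => le_iSup c n
  have hmemU : ∀ {z : L}, z ∈ U → ∃ n, z ∈ c n := by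
    intro z hz
    exact (Submodule.mem_iSup_of_directed c hmono.directed_le).mp hz
  have hYU : Y ∈ U := hcU 0 (Submodule.subset_span rfl)
  -- U is closed under bracketing with nonpositive-degree homogeneous elements
  have hU0 : ∀ j : ℤ, j ≤ 0 → ∀ a ∈ g j, ∀ u ∈ U, ⁅a, u⁆ ∈ U := by
    intro j hj a ha u hu
    obtain ⟨n, hn⟩ := hmemU hu
    refine hcU (n + 1) (le_sup_right (α := Submodule k L) ?_)
    exact Submodule.subset_span ⟨j, hj, a, ha, u, hn, rfl⟩
  -- U is closed under bracketing with elements of g 1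
  have hU1 : ∀ n, ∀ u ∈ c n, ∀ x ∈ g 1, ⁅x, u⁆ ∈ U := by
    intro n
    induction n with
    | zero =>
      intro u hu x hx
      rw [hc] at hu
      obtain ⟨t, rfl⟩ := Submodule.mem_span_singleton.mp hu
      have : ⁅x, Y⁆ = 0 := by
        have := hY x hx
        rw [← lie_skew, this, neg_zero]
      rw [lie_smul, this, smul_zero]
      exact U.zero_mem
    | succ n ih =>
      intro u hu x hx
      rw [hc] at hu
      obtain ⟨v, hv, w, hw, rfl⟩ := Submodule.mem_sup.mp hu
      rw [lie_add]
      refine U.add_mem (ih v hv x hx) ?_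
      refine Submodule.span_induction (p := fun z _ => ⁅x, z⁆ ∈ U) ?_ ?_ ?_ ?_ hw
      · rintro z ⟨j, hj, a, ha, t, ht, rfl⟩
        rw [leibniz_lie]
        refine U.add_mem ?_ (hU0 j hj a ha _ (ih t ht x hx))
        have hxa : ⁅x, a⁆ ∈ g (1 + j) := hbracket 1 j x hx a ha
        rcases lt_or_ge j 0 with hj' | hj'
        · exact hU0 (1 + j) (by omega) _ hxa t (hcU n ht)
        · have hj0 : j = 0 := le_antisymm hj hj'
          subst hj0
          exact ih t ht _ hxa
      · show ⁅x, (0 : L)⁆ ∈ U; rw [lie_zero]; exact U.zero_mem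
      · intro z₁ z₂ h₁ h₂ ih₁ ih₂
        show ⁅x, z₁ + z₂⁆ ∈ U
        rw [lie_add]; exact U.add_mem ih₁ ih₂
      · intro t z h ihz
        show ⁅x, t • z⁆ ∈ U
        rw [lie_smul]; exact U.smul_mem t ihz
  have hU1' : ∀ x ∈ g 1, ∀ u ∈ U, ⁅x, u⁆ ∈ U := by
    intro x hx u hu
    obtain ⟨n, hn⟩ := hmemU hu
    exact hU1 n u hn x hx
  -- U is closed under bracketing with elements of g j for j ≥ 1
  have hUpos : ∀ j : ℤ, 1 ≤ j → ∀ z ∈ g j, ∀ u ∈ U, ⁅z, u⁆ ∈ U := by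
    refine Int.le_induction ?_ ?_
    · exact fun z hz u hu => hU1' z hz u hu
    · intro j hj ih z hz u hu
      rcases lt_or_ge j ν with hjν | hjν
      · rw [hgen j hj hjν] at hz
        refine Submodule.span_induction (p := fun w _ => ⁅w, u⁆ ∈ U) ?_ ?_ ?_ ?_ hz
        · rintro w ⟨x, hx, y, hy, rfl⟩
          show ⁅⁅x, y⁆, u⁆ ∈ U
          rw [lie_lie]
          exact U.sub_mem (hU1' x hx _ (ih y hy u hu)) (ih y hy _ (hU1' x hx u hu))
        · show ⁅(0 : L), u⁆ ∈ U; rw [zero_lie]; exact U.zero_mem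
        · intro z₁ z₂ h₁ h₂ ih₁ ih₂
          show ⁅z₁ + z₂, u⁆ ∈ U
          rw [add_lie]; exact U.add_mem ih₁ ih₂
        · intro t w h ihw
          show ⁅t • w, u⁆ ∈ U
          rw [smul_lie]; exact U.smul_mem t ihw
      · have hb : g (j + 1) = ⊥ := hdepth (j + 1) (by rw [abs_of_pos (by omega)]; omega)
        rw [hb] at hz
        rw [(Submodule.mem_bot k).mp hz, zero_lie]
        exact U.zero_mem
  -- U is an ideal
  have hIdeal : ∀ x : L, ∀ u ∈ U, ⁅x, u⁆ ∈ U := by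
    intro x u hu
    have hx : x ∈ ⨆ j, g j := by
      rw [hdirect.submodule_iSup_eq_top]; trivial
    refine Submodule.iSup_induction (motive := fun z => ⁅z, u⁆ ∈ U) g hx ?_ ?_ ?_
    · intro j z hz
      rcases le_or_gt j 0 with hj | hj
      · exact hU0 j hj z hz u hu
      · exact hUpos j hj z hz u hu
    · show ⁅(0 : L), u⁆ ∈ U; rw [zero_lie]; exact U.zero_mem
    · intro z₁ z₂ ih₁ ih₂
      show ⁅z₁ + z₂, u⁆ ∈ U
      rw [add_lie]; exact U.add_mem ih₁ ih₂
  let I : LieIdeal k L :=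
    { toSubmodule := U
      lie_mem := fun {x m} hm => hIdeal x m hm }
  have hIY : Y ∈ I := hYU
  have hInebot : I ≠ ⊥ := by
    intro h
    rw [h] at hIY
    exact hY0 ((LieSubmodule.mem_bot (R := k) (L := L) Y).mp hIY)
  have hItop : I = ⊤ := (LieAlgebra.IsSimple.eq_bot_or_eq_top I).resolve_left hInebot
  -- everything is in U
  have hallU : ∀ z : L, z ∈ U := by
    intro z
    have : z ∈ I := by rw [hItop]; trivial
    exact this
  -- but U lies in degrees ≤ i
  set N : Submodule k L := ⨆ p : {j : ℤ // j ≤ i}, g p.1 with hN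
  have hNclosed : ∀ j : ℤ, j ≤ 0 → ∀ a ∈ g j, ∀ v ∈ N, ⁅a, v⁆ ∈ N := by
    intro j hj a ha v hv
    refine Submodule.iSup_induction (motive := fun v => ⁅a, v⁆ ∈ N)
      (fun p : {j : ℤ // j ≤ i} => g p.1) hv ?_ ?_ ?_
    · intro p z hz
      have hm : ⁅a, z⁆ ∈ g (j + p.1) := hbracket j p.1 a ha z hz
      exact Submodule.mem_iSup_of_mem ⟨j + p.1, by have := p.2; omega⟩ hm
    · show ⁅a, (0 : L)⁆ ∈ N; rw [lie_zero]; exact N.zero_mem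
    · intro z₁ z₂ ih₁ ih₂
      show ⁅a, z₁ + z₂⁆ ∈ N
      rw [lie_add]; exact N.add_mem ih₁ ih₂
  have hcN : ∀ n, c n ≤ N := by
    intro n
    induction n with
    | zero =>
      rw [hc]
      refine Submodule.span_le.mpr ?_
      rintro z rfl
      exact Submodule.mem_iSup_of_mem ⟨i, le_refl i⟩ hYmem
    | succ n ih =>
      rw [hc]
      refine sup_le ih (Submodule.span_le.mpr ?_)
      rintro z ⟨j, hj, a, ha, v, hv, rfl⟩
      exact hNclosed j hj a ha v (ih hv)
  have hUN : U ≤ N := iSup_le hcN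
  -- get contradiction with g ν ≠ ⊥
  obtain ⟨v, hvν, hv0⟩ := (Submodule.ne_bot_iff _).mp htop
  have hvN : v ∈ N := hUN (hallU v)
  have hdisj : Disjoint (g ν) (⨆ (j) (_ : j ≠ ν), g j) :=
    hdirect.submodule_iSupIndep ν
  have hNle : N ≤ ⨆ (j) (_ : j ≠ ν), g j := by
    refine iSup_le fun p => ?_
    exact le_iSup₂ (f := fun (j : ℤ) (_ : j ≠ ν) => g j) p.1 (by omega)
  have : v ∈ (⊥ : Submodule k L) :=
    hdisj.le_bot ⟨hvν, hNle hvN⟩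
  exact hv0 ((Submodule.mem_bot k).mp this)
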